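/- arXiv:1511.00638 — 2 statements merged into one kernel-verified Lean document; each statement's English description precedes it below -/
import Mathlib

section
/- Let Γ be a finitely generated torsion-free abelian group and φ: Γ → ℝ a homomorphism. Then there is a ring isomorphism R((Γ,φ)) ≅ (R[ker φ])((φ(Γ))), where R[ker φ] is the group ring of ker φ over R and (R[ker φ])((φ(Γ))) is the Novikov completion of the group ring of φ(Γ) over R[ker φ] with respect to the inclusion φ(Γ) ↪ ℝ. -/
/-- The underlying set of the Novikov completion `R((Γ,φ))`: formal sums `∑ λ_g · g`
(encoded as coefficient functions `Γ → R`) such that for every `c ∈ ℝ` only finitely many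
`g` with `λ_g ≠ 0` satisfy `φ(g) < c`. -/
def NovikovSeries (R : Type*) [CommRing R] (Γ : Type*) [AddCommGroup Γ] (φ : Γ →+ ℝ) :=
  {f : Γ → R // ∀ c : ℝ, {g : Γ | f g ≠ 0 ∧ φ g < c}.Finite}

/-- A commutative ring structure on `NovikovSeries R Γ φ` is "the" Novikov ring structure if
addition is pointwise, multiplication is the convolution product
`(λ·μ)(h) = ∑_{g₁+g₂=h} λ(g₁) μ(g₂)`, and the unit is the delta function at `0`. -/
def IsNovikovRing {R : Type*} [CommRing R] {Γ : Type*} [AddCommGroup Γ] (φ : Γ →+ ℝ)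
    (inst : CommRing (NovikovSeries R Γ φ)) : Prop :=
  letI := inst
  (∀ a b : NovikovSeries R Γ φ, ∀ h : Γ, (a * b).val h = ∑ᶠ g : Γ, a.val g * b.val (h - g)) ∧
  (∀ a b : NovikovSeries R Γ φ, (a + b).val = a.val + b.val) ∧
  ((1 : NovikovSeries R Γ φ).val 0 = 1 ∧
    ∀ g : Γ, g ≠ 0 → (1 : NovikovSeries R Γ φ).val g = 0)

/-- Convolution formula for `AddMonoidAlgebra` multiplication as a `finsum`. -/
theorem AMA.mul_apply_finsum {k G : Type*} [Semiring k] [AddCommGroup G]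
    (f g : AddMonoidAlgebra k G) (x : G) :
    (f * g).coeff x = ∑ᶠ y, f.coeff y * g.coeff (x - y) := by
  classical
  rw [AddMonoidAlgebra.coeff_mul]
  rw [finsum_eq_sum_of_support_subset (s := f.coeff.support) _ ?hs]
  case hs =>
    intro y hy
    simp only [Function.mem_support] at hy
    simp only [Finset.coe_sort_coe, Finset.mem_coe, Finsupp.mem_support_iff]
    intro h; rw [h, zero_mul] at hy; exact hy rfl
  rw [Finsupp.sum]
  refine Finset.sum_congr rfl fun y _ => ?_
  rw [Finsupp.sum]
  have key : ∀ a₂ ∈ g.coeff.support, (if y + a₂ = x then f.coeff y * g.coeff a₂ else 0)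
      = if a₂ = x - y then f.coeff y * g.coeff a₂ else 0 := by
    intro a₂ _
    congr 1
    simp only [eq_iff_iff]
    rw [eq_sub_iff_add_eq, add_comm a₂ y]
  rw [Finset.sum_congr rfl key, Finset.sum_ite_eq' g.coeff.support (x - y) (fun a₂ => f.coeff y * g.coeff a₂)]
  by_cases h : x - y ∈ g.coeff.support
  · rw [if_pos h]
  · rw [if_neg h]
    rw [Finsupp.notMem_support_iff.1 h, mul_zero]

/-- A surjection from an f.g. abelian group onto a subgroup of `ℝ` splits. -/
theorem exists_splitting {Γ : Type*} [AddCommGroup Γ] [AddGroup.FG Γ] (φ : Γ →+ ℝ) :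
    ∃ s : φ.range →+ Γ, ∀ x, φ.rangeRestrict (s x) = x := by
  haveI : AddGroup.FG φ.range := AddGroup.fg_of_surjective φ.rangeRestrict_surjective
  haveI : Module.Finite ℤ φ.range := Module.Finite.iff_addGroup_fg.2 ‹_›
  haveI : NoZeroSMulDivisors ℤ φ.range := by
    constructor
    intro n x h
    have h2 : n • (x : ℝ) = 0 := by
      have := congrArg (Subtype.val) h
      simpa using this
    rcases smul_eq_zero.1 h2 with h1 | h2
    · exact Or.inl h1
    · exact Or.inr (Subtype.ext h2)
  haveI : Module.Free ℤ φ.range := Module.free_of_finite_type_torsion_free'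
  obtain ⟨h, hh⟩ := Module.projective_lifting_property φ.rangeRestrict.toIntLinearMap
    (LinearMap.id : φ.range →ₗ[ℤ] φ.range) φ.rangeRestrict_surjective
  exact ⟨h.toAddMonoidHom, fun x => LinearMap.congr_fun hh x⟩

/-- Novikov supports behave well under convolution: the convolution index set is finite. -/
theorem novikov_conv_finite {M : Type*} [MulZeroClass M] {Γ : Type*} [AddCommGroup Γ]
    (φ : Γ →+ ℝ) {a b : Γ → M}
    (ha : ∀ c : ℝ, {g : Γ | a g ≠ 0 ∧ φ g < c}.Finite)
    (hb : ∀ c : ℝ, {g : Γ | b g ≠ 0 ∧ φ g < c}.Finite)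
    (h : Γ) : {g : Γ | a g ≠ 0 ∧ b (h - g) ≠ 0}.Finite := by
  classical
  obtain ⟨m, hm⟩ : ∃ m : ℝ, ∀ g, b g ≠ 0 → m ≤ φ g := by
    by_cases hne : ((hb 0).toFinset.image (fun g => φ g)).Nonempty
    · refine ⟨min (((hb 0).toFinset.image (fun g => φ g)).min' hne) 0, fun g hg => ?_⟩
      by_cases hlt : φ g < 0
      · have hmem : φ g ∈ (hb 0).toFinset.image (fun g => φ g) :=
          Finset.mem_image_of_mem _ ((hb 0).mem_toFinset.2 ⟨hg, hlt⟩)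
        exact le_trans (min_le_left _ _) (Finset.min'_le _ _ hmem)
      · exact le_trans (min_le_right _ _) (not_lt.1 hlt)
    · refine ⟨0, fun g hg => ?_⟩
      by_contra hlt
      exact hne ⟨φ g, Finset.mem_image_of_mem _ ((hb 0).mem_toFinset.2 ⟨hg, not_le.1 hlt⟩)⟩
  refine (ha (φ h - m + 1)).subset ?_
  rintro g ⟨hag, hbg⟩
  refine ⟨hag, ?_⟩
  have h1 : m ≤ φ (h - g) := hm _ hbg
  rw [map_sub] at h1
  linarith

/-- The pre-2025 Mathlib `AddMonoid.IsTorsionFree` (removed upstream), restated with its old meaning. -/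
def AddMonoid.IsTorsionFree (G : Type*) [AddMonoid G] : Prop :=
  ∀ g : G, g ≠ 0 → ¬IsOfFinAddOrder g

/-- For a finitely generated torsion-free abelian group `Γ` and a homomorphism
`φ : Γ →+ ℝ`, there is a ring isomorphism `R((Γ,φ)) ≅ (R[ker φ])((φ(Γ)))`, where the right
hand side is the Novikov completion of the group ring of `φ(Γ) ⊆ ℝ` over the group ring
`R[ker φ]`, with respect to the inclusion `φ(Γ) ↪ ℝ`. -/
theorem novikovSeries_decomposition (R : Type*) [CommRing R]
    (Γ : Type*) [AddCommGroup Γ] [AddGroup.FG Γ] (htf : AddMonoid.IsTorsionFree Γ)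
    (φ : Γ →+ ℝ)
    [instA : CommRing (NovikovSeries R Γ φ)] (hA : IsNovikovRing φ instA)
    [instB : CommRing (NovikovSeries (AddMonoidAlgebra R φ.ker) φ.range φ.range.subtype)]
    (hB : IsNovikovRing φ.range.subtype instB) :
    Nonempty (NovikovSeries R Γ φ ≃+*
      NovikovSeries (AddMonoidAlgebra R φ.ker) φ.range φ.range.subtype) := by
  classical
  obtain ⟨s, hs⟩ := exists_splitting φ
  set π := φ.rangeRestrict with hπdef
  have hπval : ∀ g, (π g : ℝ) = φ g := fun g => rfl
  have hφs : ∀ x : φ.range, φ (s x) = (x : ℝ) := fun x => congrArg Subtype.val (hs x)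
  have hkφ : ∀ k : φ.ker, φ (k : Γ) = 0 := fun k => AddMonoidHom.mem_ker.1 k.2
  have hπk : ∀ k : φ.ker, π (k : Γ) = 0 := fun k => Subtype.ext (by
    rw [hπval, hkφ]; rfl)
  have hπks : ∀ (k : φ.ker) (r : φ.range), π ((k : Γ) + s r) = r := by
    intro k r; rw [map_add, hπk, hs, zero_add]
  have hφks : ∀ (k : φ.ker) (r : φ.range), φ ((k : Γ) + s r) = (r : ℝ) := by
    intro k r; rw [map_add, hkφ, hφs, zero_add]
  have hkerel : ∀ g : Γ, g - s (π g) ∈ φ.ker := by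
    intro g
    rw [AddMonoidHom.mem_ker, map_sub, hφs, hπval, sub_self]
  -- coefficient functions have finite support
  have hc : ∀ (f : NovikovSeries R Γ φ) (r : φ.range),
      (Function.support (fun k : φ.ker => f.val ((k : Γ) + s r))).Finite := by
    intro f r
    have hinj : Set.InjOn (fun k : φ.ker => (k : Γ) + s r)
        ((fun k : φ.ker => (k : Γ) + s r) ⁻¹' {g : Γ | f.val g ≠ 0 ∧ φ g < (r : ℝ) + 1}) := by
      intro k1 _ k2 _ h12
      exact Subtype.ext (add_right_cancel h12)
    refine Set.Finite.subset ((f.2 ((r : ℝ) + 1)).preimage hinj) ?_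
    intro k hk
    simp only [Function.mem_support] at hk
    exact ⟨hk, by rw [hφks]; linarith⟩
  -- forward map satisfies the Novikov condition
  have hΦnov : ∀ (f : NovikovSeries R Γ φ) (c : ℝ),
      {r : φ.range | AddMonoidAlgebra.ofCoeff (Finsupp.ofSupportFinite _ (hc f r)) ≠ 0 ∧ φ.range.subtype r < c}.Finite := by
    intro f c
    refine Set.Finite.subset ((f.2 c).image π) ?_
    rintro r ⟨hr, hrc⟩
    obtain ⟨k, hk⟩ : ∃ k : φ.ker, f.val ((k : Γ) + s r) ≠ 0 := by
      by_contra hall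
      push_neg at hall
      apply hr
      ext k
      exact hall k
    exact ⟨(k : Γ) + s r, ⟨hk, by rw [hφks]; exact hrc⟩, hπks k r⟩
  -- backward map satisfies the Novikov condition
  have hΨnov : ∀ (F : NovikovSeries (AddMonoidAlgebra R φ.ker) φ.range φ.range.subtype) (c : ℝ),
      {g : Γ | (F.val (π g)).coeff ⟨g - s (π g), hkerel g⟩ ≠ 0 ∧ φ g < c}.Finite := by
    intro F c
    refine Set.Finite.subset (Set.Finite.biUnion (F.2 c) (fun r _ =>
      ((F.val r).coeff.support.finite_toSet.image (fun k : φ.ker => (k : Γ) + s r)))) ?_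
    rintro g ⟨hg, hgc⟩
    refine Set.mem_biUnion (x := π g) ?_ ?_
    · exact ⟨fun h0 => hg (by rw [h0]; rfl), by rw [← hπval g] at hgc; exact hgc⟩
    · refine ⟨⟨g - s (π g), hkerel g⟩, ?_, ?_⟩
      · simpa only [Finset.mem_coe, Finsupp.mem_support_iff] using hg
      · simp
  -- the two maps
  let Φ : NovikovSeries R Γ φ → NovikovSeries (AddMonoidAlgebra R φ.ker) φ.range φ.range.subtype :=
    fun f => ⟨fun r => AddMonoidAlgebra.ofCoeff (Finsupp.ofSupportFinite _ (hc f r)), hΦnov f⟩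
  let Ψ : NovikovSeries (AddMonoidAlgebra R φ.ker) φ.range φ.range.subtype →
      NovikovSeries R Γ φ :=
    fun F => ⟨fun g => (F.val (π g)).coeff ⟨g - s (π g), hkerel g⟩, hΨnov F⟩
  -- key dependent-rewrite helper
  have hval : ∀ (F : NovikovSeries (AddMonoidAlgebra R φ.ker) φ.range φ.range.subtype)
      (k : φ.ker) (r : φ.range), (Ψ F).val ((k : Γ) + s r) = (F.val r).coeff k := by
    intro F k r
    show (F.val (π ((k : Γ) + s r))).coeff ⟨((k : Γ) + s r) - s (π ((k : Γ) + s r)), _⟩ = (F.val r).coeff k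
    have h1 := hπks k r
    have h2 : ∀ (q : φ.range) (hq : q = r) (hmem : ((k : Γ) + s r) - s q ∈ φ.ker),
        (F.val q).coeff ⟨((k : Γ) + s r) - s q, hmem⟩ = (F.val r).coeff k := by
      rintro q rfl hmem
      congr 1
      exact Subtype.ext (by simp)
    exact h2 _ h1 _
  have hleft : ∀ f, Ψ (Φ f) = f := by
    intro f
    apply Subtype.ext
    funext g
    show ((Φ f).val (π g)).coeff ⟨g - s (π g), hkerel g⟩ = f.val g
    show f.val (((g - s (π g)) : Γ) + s (π g)) = f.val g
    rw [sub_add_cancel]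
  have hright : ∀ F, Φ (Ψ F) = F := by
    intro F
    apply Subtype.ext
    funext r
    apply AddMonoidAlgebra.ext
    apply Finsupp.ext
    intro k
    show (Ψ F).val ((k : Γ) + s r) = (F.val r).coeff k
    exact hval F k r
  -- additivity
  have hadd : ∀ a b, Φ (a + b) = Φ a + Φ b := by
    intro a b
    apply Subtype.ext
    funext r
    apply AddMonoidAlgebra.ext
    apply Finsupp.ext
    intro k
    have h1 : ((Φ (a + b)).val r).coeff k = (a + b).val ((k : Γ) + s r) := rfl
    have h2 : ((Φ a + Φ b).val r).coeff k = ((Φ a).val r).coeff k + ((Φ b).val r).coeff k := by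
      rw [hB.2.1]; rfl
    rw [h1, h2, hA.2.1]
    rfl
  -- the reindexing equivalence
  let e : φ.range × φ.ker ≃ Γ :=
    { toFun := fun p => (p.2 : Γ) + s p.1
      invFun := fun g => (π g, ⟨g - s (π g), hkerel g⟩)
      left_inv := by
        rintro ⟨q, j⟩
        have h1 := hπks j q
        refine Prod.ext h1 ?_
        apply Subtype.ext
        show ((j : Γ) + s q) - s (π ((j : Γ) + s q)) = (j : Γ)
        rw [h1]
        simp
      right_inv := by
        intro g
        show (g - s (π g)) + s (π g) = g
        rw [sub_add_cancel] }
  -- multiplicativity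
  have hmul : ∀ a b, Φ (a * b) = Φ a * Φ b := by
    intro a b
    apply Subtype.ext
    funext r
    apply AddMonoidAlgebra.ext
    apply Finsupp.ext
    intro k
    -- RHS
    have hsupfin : (Function.support
        (fun q : φ.range => (Φ a).val q * (Φ b).val (r - q))).Finite := by
      refine Set.Finite.subset
        (novikov_conv_finite φ.range.subtype (Φ a).2 (Φ b).2 r) ?_
      intro q hq
      simp only [Function.mem_support] at hq
      exact ⟨left_ne_zero_of_mul hq, right_ne_zero_of_mul hq⟩
    have hRHS : ((Φ a * Φ b).val r).coeff k
        = ∑ᶠ q : φ.range, ((Φ a).val q * (Φ b).val (r - q)).coeff k := by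
      rw [hB.1 (Φ a) (Φ b) r]
      exact ((Finsupp.applyAddHom (M := R) k).comp AddMonoidAlgebra.coeffAddEquiv.toAddMonoidHom).map_finsum hsupfin
    have hRHS2 : ((Φ a * Φ b).val r).coeff k
        = ∑ᶠ q : φ.range, ∑ᶠ j : φ.ker, ((Φ a).val q).coeff j * ((Φ b).val (r - q)).coeff (k - j) := by
      rw [hRHS]
      exact finsum_congr fun q => AMA.mul_apply_finsum _ _ k
    -- LHS
    have hconvfin : {g : Γ | a.val g ≠ 0 ∧ b.val (((k : Γ) + s r) - g) ≠ 0}.Finite :=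
      novikov_conv_finite φ a.2 b.2 _
    have hsupfin2 : (Function.support
        (fun p : φ.range × φ.ker =>
          a.val (e p) * b.val (((k : Γ) + s r) - e p))).Finite := by
      refine Set.Finite.subset (hconvfin.preimage (e.injective.injOn)) ?_
      intro p hp
      simp only [Function.mem_support] at hp
      exact ⟨left_ne_zero_of_mul hp, right_ne_zero_of_mul hp⟩
    have hLHS : ((Φ (a * b)).val r).coeff k
        = ∑ᶠ q : φ.range, ∑ᶠ j : φ.ker,
            a.val ((j : Γ) + s q) * b.val (((k : Γ) + s r) - ((j : Γ) + s q)) := by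
      show (a * b).val ((k : Γ) + s r) = _
      rw [hA.1 a b ((k : Γ) + s r)]
      rw [← finsum_comp_equiv e]
      exact finsum_curry _ hsupfin2
    rw [hLHS, hRHS2]
    refine finsum_congr fun q => finsum_congr fun j => ?_
    have h3 : (k : Γ) + s r - ((j : Γ) + s q) = ((k - j : φ.ker) : Γ) + s (r - q) := by
      push_cast [map_sub]
      abel
    rw [h3]
    rfl
  exact ⟨{ toFun := Φ, invFun := Ψ, left_inv := hleft, right_inv := hright,
           map_mul' := hmul, map_add' := hadd }⟩
end

section
/- Let R be an integral domain, Γ a finitely generated torsion-free abelian group, and φ: Γ → ℝ a homomorphism. Then the Novikov ring R((Γ,φ)) is an integral domain. -/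
/-- Auxiliary instance: the lexicographic linear ordered group structure on `Fin n → ℤ`. -/
noncomputable instance novikovAuxLOACG (n : ℕ) : IsOrderedCancelAddMonoid (Lex (Fin n → ℤ)) :=
  inferInstance

/-- Auxiliary instance: the lexicographic linear order on `Fin n → ℤ`. -/
noncomputable instance novikovAuxLO (n : ℕ) : LinearOrder (Lex (Fin n → ℤ)) :=
  inferInstance

/-- For an integral domain `R`, a finitely generated torsion-free abelian group
`Γ`, and a homomorphism `φ : Γ →+ ℝ`, the Novikov ring `R((Γ,φ))` is an integral domain. -/
theorem novikovSeries_isDomain (R : Type*) [CommRing R] [IsDomain R]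
    (Γ : Type*) [AddCommGroup Γ] [AddGroup.FG Γ] (htf : AddMonoid.IsTorsionFree Γ)
    (φ : Γ →+ ℝ)
    [inst : CommRing (NovikovSeries R Γ φ)] (hspec : IsNovikovRing φ inst) :
    IsDomain (NovikovSeries R Γ φ) := by
  obtain ⟨hmul, hadd, hone0, hone⟩ := hspec
  -- the zero element has zero coefficients
  have hzero : (0 : NovikovSeries R Γ φ).val = 0 := by
    have h := hadd 0 0
    rw [add_zero] at h
    have : (0 : NovikovSeries R Γ φ).val + 0 =
        (0 : NovikovSeries R Γ φ).val + (0 : NovikovSeries R Γ φ).val := by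
      rw [add_zero]; exact h
    exact (add_left_cancel this).symm
  have hval_ne : ∀ a : NovikovSeries R Γ φ, a ≠ 0 → ∃ g, a.val g ≠ 0 := by
    intro a ha
    by_contra h
    push_neg at h
    exact ha (Subtype.ext (by funext g; rw [h g, hzero]; rfl))
  -- set up the auxiliary linearly ordered group
  haveI : IsAddTorsionFree Γ := IsAddTorsionFree.of_not_isOfFinAddOrder htf
  haveI : Module.Finite ℤ Γ := Module.Finite.iff_addGroup_fg.mpr ‹_›
  set n := Module.finrank ℤ Γ with hn
  let b : Module.Basis (Fin n) ℤ Γ := Module.finBasis ℤ Γ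
  let ψ : Γ →+ (Fin n → ℤ) := b.equivFun.toLinearMap.toAddMonoidHom
  have hψ : Function.Injective ψ := b.equivFun.injective
  let e : Γ → (ℝ ×ₗ Lex (Fin n → ℤ)) := fun g => toLex (φ g, toLex (ψ g))
  have he_inj : Function.Injective e := by
    intro g h hgh
    have h2 : (φ g, toLex (ψ g)) = (φ h, toLex (ψ h)) := toLex.injective hgh
    exact hψ (toLex.injective (congrArg Prod.snd h2))
  have he_sub : ∀ g h : Γ, e (g - h) = e g - e h := by
    intro g h
    show toLex (φ (g - h), toLex (ψ (g - h))) = _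
    rw [map_sub, map_sub]
    rfl
  have he_phi_le : ∀ g h : Γ, e g ≤ e h → φ g ≤ φ h := by
    intro g h hle
    rcases (Prod.Lex.le_iff).mp hle with h1 | ⟨h1, _⟩
    · exact le_of_lt h1
    · exact le_of_eq h1
  have he_phi_lt : ∀ g h : Γ, φ g < φ h → e g < e h := by
    intro g h hlt
    exact (Prod.Lex.lt_iff).mpr (Or.inl hlt)
  -- existence of a minimal element of the support
  have hmin : ∀ a : NovikovSeries R Γ φ, a ≠ 0 →
      ∃ g₀, a.val g₀ ≠ 0 ∧ ∀ g, a.val g ≠ 0 → e g₀ ≤ e g := by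
    intro a ha
    obtain ⟨g₁, hg₁⟩ := hval_ne a ha
    have hfin := a.property (φ g₁ + 1)
    have hne : g₁ ∈ hfin.toFinset := by
      rw [Set.Finite.mem_toFinset]
      exact ⟨hg₁, by linarith⟩
    obtain ⟨g₀, hg₀mem, hg₀min⟩ := hfin.toFinset.exists_min_image e ⟨g₁, hne⟩
    rw [Set.Finite.mem_toFinset] at hg₀mem
    refine ⟨g₀, hg₀mem.1, ?_⟩
    intro g hg
    by_cases hc : φ g < φ g₁ + 1
    · exact hg₀min g (by rw [Set.Finite.mem_toFinset]; exact ⟨hg, hc⟩)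
    · push_neg at hc
      have h1 : φ g₀ ≤ φ g₁ := he_phi_le _ _ (hg₀min g₁ hne)
      exact le_of_lt (he_phi_lt _ _ (by linarith))
  -- nontriviality
  haveI : Nontrivial (NovikovSeries R Γ φ) := by
    refine ⟨1, 0, fun h => ?_⟩
    have : (1 : NovikovSeries R Γ φ).val 0 = (0 : NovikovSeries R Γ φ).val 0 := by rw [h]
    rw [hone0, hzero] at this
    exact one_ne_zero this
  haveI : NoZeroDivisors (NovikovSeries R Γ φ) := by
    constructor
    intro a c hac
    by_contra hcon
    push_neg at hcon
    obtain ⟨ha, hc⟩ := hcon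
    obtain ⟨g₀, hg₀, hg₀min⟩ := hmin a ha
    obtain ⟨h₀, hh₀, hh₀min⟩ := hmin c hc
    have key : (a * c).val (g₀ + h₀) = a.val g₀ * c.val h₀ := by
      rw [hmul]
      refine finsum_eq_single _ g₀ ?_ |>.trans (by rw [add_sub_cancel_left])
      intro g hg
      by_cases hag : a.val g = 0
      · rw [hag, zero_mul]
      · have h1 : e g₀ < e g := lt_of_le_of_ne (hg₀min g hag) (fun h => hg (he_inj h).symm)
        have h2 : e (g₀ + h₀ - g) < e h₀ := by
          rw [he_sub]
          have : e (g₀ + h₀) = e (g₀ + h₀ - h₀) + e h₀ := by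
            rw [he_sub]; abel
          rw [add_sub_cancel_right] at this
          rw [this]
          have := sub_lt_sub_left h1 (e g₀ + e h₀)
          calc e g₀ + e h₀ - e g < e g₀ + e h₀ - e g₀ := by exact this
            _ = e h₀ := by abel
        have h3 : c.val (g₀ + h₀ - g) = 0 := by
          by_contra h4
          exact absurd (hh₀min _ h4) (not_le.mpr h2)
        rw [h3, mul_zero]
    rw [hac, hzero] at key
    exact mul_ne_zero hg₀ hh₀ key.symm
  exact NoZeroDivisors.to_isDomain _
end
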